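/- For the kick-model, the instantaneous shape change rotates the angular momentum as L_t = Rₓ(-χ) L_s with χ = ∫₀^π I⁻¹ₓₓ(α) Aₓ(α) dα: precisely, if L solves L' = (I⁻¹ₓₓ(α(t)) Aₓ(α(t)) α'(t)) (e₁ × L) on [0,τ] with α(0) = π, α(τ) = 0, and α monotone differentiable, then L(τ) = Rₓ(-χ) L(0). -/

import Mathlib

open Matrix Real Set

/-- Rotation about the x-axis by angle `θ`. -/
noncomputable def Rx (θ : ℝ) : Matrix (Fin 3) (Fin 3) ℝ :=
  !![1, 0, 0; 0, Real.cos θ, -Real.sin θ; 0, Real.sin θ, Real.cos θ]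

/-- In the kick-model, the instantaneous shape change rotates the angular
momentum as `L(τ) = Rₓ(-χ) L(0)` with `χ = ∫₀^π Iₓₓ⁻¹(α) Aₓ(α) dα`, where `L` solves
`L' = (Iₓₓ⁻¹(α(t)) Aₓ(α(t)) α'(t)) (e₁ × L)` on `[0, τ]` with `α(0) = π`, `α(τ) = 0`,
and `α` monotone (strictly decreasing) and C¹. -/
theorem kick_model_tilt
    (τ : ℝ) (hτ : 0 < τ)
    (α : ℝ → ℝ) (hα : Differentiable ℝ α) (hα' : Continuous (deriv α))
    (hmono : StrictAntiOn α (Icc 0 τ)) (h0 : α 0 = π) (h1 : α τ = 0)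
    (Ixxinv Ax : ℝ → ℝ) (hI : Continuous Ixxinv) (hA : Continuous Ax)
    (L : ℝ → Fin 3 → ℝ)
    (hode : ∀ t ∈ Icc 0 τ,
      HasDerivAt L ((Ixxinv (α t) * Ax (α t) * deriv α t) •
        ((![1, 0, 0] : Fin 3 → ℝ) ⨯₃ (L t))) t)
    (χ : ℝ) (hχ : χ = ∫ a in (0:ℝ)..π, Ixxinv a * Ax a) :
    L τ = (Rx (-χ)).mulVec (L 0) := by
  set f : ℝ → ℝ := fun s => Ixxinv (α s) * Ax (α s) * deriv α s with hf
  have hfcont : Continuous f :=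
    (((hI.comp hα.continuous).mul (hA.comp hα.continuous)).mul hα')
  set φ : ℝ → ℝ := fun t => ∫ s in (0:ℝ)..t, f s with hφdef
  have hφ : ∀ t : ℝ, HasDerivAt φ (f t) t := by
    intro t
    exact intervalIntegral.integral_hasStrictDerivAt_right
      (hfcont.intervalIntegrable 0 t) (hfcont.stronglyMeasurableAtFilter _ _)
      hfcont.continuousAt |>.hasDerivAt
  have hφ0 : φ 0 = 0 := intervalIntegral.integral_same
  -- change of variables for φ τ
  have hφτ : φ τ = -χ := by
    have hcv : (∫ s in (0:ℝ)..τ, deriv α s • ((fun a => Ixxinv a * Ax a) ∘ α) s)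
        = ∫ a in (α 0)..(α τ), Ixxinv a * Ax a := by
      apply intervalIntegral.integral_comp_smul_deriv
      · intro x _; exact (hα x).hasDerivAt
      · exact hα'.continuousOn
      · exact hI.mul hA
    have : φ τ = ∫ s in (0:ℝ)..τ, deriv α s • ((fun a => Ixxinv a * Ax a) ∘ α) s := by
      simp only [hφdef]
      congr 1; funext s; simp [hf, Function.comp]; ring
    rw [this, hcv, h0, h1, hχ, intervalIntegral.integral_symm]
  -- component derivatives of L
  have hLi : ∀ t ∈ Icc (0:ℝ) τ, ∀ i : Fin 3,
      HasDerivAt (fun t => L t i)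
        ((f t) * (((![1, 0, 0] : Fin 3 → ℝ) ⨯₃ (L t)) i)) t := by
    intro t ht i
    have := (hasDerivAt_pi.1 (hode t ht)) i
    simpa [Pi.smul_apply, smul_eq_mul] using this
  have hcross : ∀ t : ℝ, ((![1, 0, 0] : Fin 3 → ℝ) ⨯₃ (L t)) =
      ![0, -(L t 2), L t 1] := by
    intro t
    simp [crossProduct]
  have hL0' : ∀ t ∈ Icc (0:ℝ) τ, HasDerivAt (fun t => L t 0) 0 t := by
    intro t ht
    have := hLi t ht 0
    rw [hcross t] at this
    simpa using this
  have hL1' : ∀ t ∈ Icc (0:ℝ) τ, HasDerivAt (fun t => L t 1) (f t * (-(L t 2))) t := by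
    intro t ht
    have := hLi t ht 1
    rw [hcross t] at this
    simpa using this
  have hL2' : ∀ t ∈ Icc (0:ℝ) τ, HasDerivAt (fun t => L t 2) (f t * (L t 1)) t := by
    intro t ht
    have := hLi t ht 2
    rw [hcross t] at this
    simpa using this
  -- invariant functions
  set A : ℝ → ℝ := fun t => L t 1 * Real.cos (φ t) + L t 2 * Real.sin (φ t) with hA1
  set B : ℝ → ℝ := fun t => - (L t 1) * Real.sin (φ t) + L t 2 * Real.cos (φ t) with hB1
  have hAd : ∀ t ∈ Icc (0:ℝ) τ, HasDerivAt A 0 t := by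
    intro t ht
    have h1' := (hL1' t ht).mul ((hφ t).cos)
    have h2' := (hL2' t ht).mul ((hφ t).sin)
    have := h1'.add h2'
    exact this.congr_deriv (by ring)
  have hBd : ∀ t ∈ Icc (0:ℝ) τ, HasDerivAt B 0 t := by
    intro t ht
    have h1' := ((hL1' t ht).neg).mul ((hφ t).sin)
    have h2' := (hL2' t ht).mul ((hφ t).cos)
    have := h1'.add h2'
    exact this.congr_deriv (by simp only [Pi.neg_apply]; ring)
  -- constancy
  have hconst : ∀ (g : ℝ → ℝ), (∀ t ∈ Icc (0:ℝ) τ, HasDerivAt g 0 t) → g τ = g 0 := by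
    intro g hg
    have hcont : ContinuousOn g (Icc 0 τ) := fun x hx => (hg x hx).continuousAt.continuousWithinAt
    have := constant_of_has_deriv_right_zero hcont
      (fun x hx => ((hg x (Ico_subset_Icc_self hx)).hasDerivWithinAt))
    exact this τ (right_mem_Icc.2 hτ.le)
  have hAeq : A τ = A 0 := hconst A hAd
  have hBeq : B τ = B 0 := hconst B hBd
  have h0eq : L τ 0 = L 0 0 := hconst (fun t => L t 0) hL0'
  simp only [hA1, hB1] at hAeq hBeq
  simp only [hφ0, Real.cos_zero, Real.sin_zero, mul_one, mul_zero, add_zero,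
    zero_add, neg_zero] at hAeq hBeq
  -- now solve for L τ
  have hpyth := Real.sin_sq_add_cos_sq (φ τ)
  have hL1 : L τ 1 = Real.cos (φ τ) * L 0 1 - Real.sin (φ τ) * L 0 2 := by
    linear_combination Real.cos (φ τ) * hAeq - Real.sin (φ τ) * hBeq - L τ 1 * hpyth
  have hL2 : L τ 2 = Real.sin (φ τ) * L 0 1 + Real.cos (φ τ) * L 0 2 := by
    linear_combination Real.sin (φ τ) * hAeq + Real.cos (φ τ) * hBeq - L τ 2 * hpyth
  funext i
  fin_cases i <;>
    simp [Rx, Matrix.mulVec, dotProduct, Fin.sum_univ_three, ← hφτ,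
      h0eq, hL1, hL2] <;> ring
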